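/- Let Σ be an axisymmetric inner-convex C^{1,1} surface generated by Lipschitz θ : [0,L] → ℝ with θ(0)=0, θ(L)=π, x(s)=∫₀ˢ cos θ(t) dt, x(L)=0, x>0 on (0,L), and with nonnegative Gaussian curvature, i.e., θ'(s)·sin θ(s) ≥ 0 for a.e. s. Then with λ = L/π: 4πλ² − 2λ·∫_Σ H dA + A(Σ) ≤ 0, where ∫_Σ H dA = π∫₀ᴸ(sin θ + θ'x) ds and A(Σ) = 2π∫₀ᴸ x ds. -/

import Mathlib

open Real Set intervalIntegral MeasureTheory Filter Topology

section Helpers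

lemma seq_tendsto_slope {g : ℝ → ℝ} {d s : ℝ} (h : HasDerivAt g d s) :
    Tendsto (fun n : ℕ => (g (s + ((n : ℝ) + 1)⁻¹) - g s) / ((n : ℝ) + 1)⁻¹) atTop (𝓝 d) := by
  have hslope := hasDerivAt_iff_tendsto_slope.mp h
  have hseq : Tendsto (fun n : ℕ => s + ((n : ℝ) + 1)⁻¹) atTop (𝓝[≠] s) := by
    apply tendsto_nhdsWithin_of_tendsto_nhds_of_eventually_within
    · have : Tendsto (fun n : ℕ => ((n : ℝ) + 1)⁻¹) atTop (𝓝 0) :=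
        tendsto_one_div_add_atTop_nhds_zero_nat.congr (by intro n; rw [one_div])
      simpa using tendsto_const_nhds.add this
    · filter_upwards with n
      have : (0:ℝ) < ((n : ℝ) + 1)⁻¹ := by positivity
      simp only [mem_compl_iff, mem_singleton_iff]
      intro hh; nlinarith [hh]
  have := hslope.comp hseq
  convert this using 2 with n
  simp [slope, Function.comp]
  ring_nf

lemma lipschitz_ftc {g : ℝ → ℝ} {C : NNReal} (hg : LipschitzWith C g) {a b : ℝ} (hab : a ≤ b) :
    ∫ s in a..b, deriv g s = g b - g a := by
  set h : ℕ → ℝ := fun n => ((n : ℝ) + 1)⁻¹ with hh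
  have hpos : ∀ n, 0 < h n := fun n => by positivity
  set F : ℕ → ℝ → ℝ := fun n s => (g (s + h n) - g s) / h n with hF
  have hgc : Continuous g := hg.continuous
  have hgi : ∀ u v : ℝ, IntervalIntegrable g volume u v := fun u v =>
    hgc.intervalIntegrable u v
  have hae : ∀ᵐ s ∂(volume.restrict (Ioc a b)),
      Tendsto (fun n => F n s) atTop (𝓝 (deriv g s)) := by
    have := hg.ae_differentiableAt (μ := volume)
    exact ae_restrict_of_ae (this.mono fun s hs => seq_tendsto_slope hs.hasDerivAt)
  have hbound : ∀ n, ∀ᵐ s ∂(volume.restrict (Ioc a b)), ‖F n s‖ ≤ (C : ℝ) := by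
    intro n
    filter_upwards with s
    have h1 : |g (s + h n) - g s| ≤ C * h n := by
      have := hg.dist_le_mul (s + h n) s
      simpa [Real.dist_eq, abs_of_pos (hpos n)] using this
    rw [Real.norm_eq_abs, hF, abs_div, abs_of_pos (hpos n)]
    rw [div_le_iff₀ (hpos n)]
    exact h1
  have hmeas : ∀ n, AEStronglyMeasurable (F n) (volume.restrict (Ioc a b)) := by
    intro n
    exact (((hgc.comp (continuous_add_right (h n))).sub hgc).div_const _).aestronglyMeasurable
  have hdct := MeasureTheory.tendsto_integral_of_dominated_convergence
    (fun _ => (C : ℝ)) hmeas (integrable_const _) hbound hae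
  have hcompute : ∀ n, ∫ s in Ioc a b, F n s =
      ((∫ x in b..(b + h n), g x) - ∫ x in a..(a + h n), g x) / h n := by
    intro n
    rw [← intervalIntegral.integral_of_le hab]
    have : ∫ s in a..b, F n s = ((∫ s in a..b, g (s + h n)) - ∫ s in a..b, g s) / h n := by
      simp only [hF]
      rw [intervalIntegral.integral_div]
      congr 1
      exact intervalIntegral.integral_sub
        ((hgc.comp (continuous_add_right (h n))).intervalIntegrable a b) (hgi a b)
    rw [this, intervalIntegral.integral_comp_add_right]
    have e1 : (∫ x in (a + h n)..(b + h n), g x) =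
        (∫ x in (a + h n)..b, g x) + ∫ x in b..(b + h n), g x :=
      (intervalIntegral.integral_add_adjacent_intervals (hgi _ _) (hgi _ _)).symm
    have e2 : (∫ x in a..b, g x) =
        (∫ x in a..(a + h n), g x) + ∫ x in (a + h n)..b, g x :=
      (intervalIntegral.integral_add_adjacent_intervals (hgi _ _) (hgi _ _)).symm
    rw [e1, e2]; ring
  have hb_lim : Tendsto (fun n => (∫ x in b..(b + h n), g x) / h n) atTop (𝓝 (g b)) := by
    have hD : HasDerivAt (fun u => ∫ x in b..u, g x) (g b) b :=
      intervalIntegral.integral_hasDerivAt_right (hgi b b)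
        (hgc.stronglyMeasurableAtFilter _ _) hgc.continuousAt
    have := seq_tendsto_slope hD
    simp only [intervalIntegral.integral_same, sub_zero] at this
    exact this
  have ha_lim : Tendsto (fun n => (∫ x in a..(a + h n), g x) / h n) atTop (𝓝 (g a)) := by
    have hD : HasDerivAt (fun u => ∫ x in a..u, g x) (g a) a :=
      intervalIntegral.integral_hasDerivAt_right (hgi a a)
        (hgc.stronglyMeasurableAtFilter _ _) hgc.continuousAt
    have := seq_tendsto_slope hD
    simp only [intervalIntegral.integral_same, sub_zero] at this
    exact this
  have hlim2 : Tendsto (fun n => ∫ s in Ioc a b, F n s) atTop (𝓝 (g b - g a)) := by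
    simp_rw [hcompute, sub_div]
    exact hb_lim.sub ha_lim
  have := tendsto_nhds_unique hdct hlim2
  rw [intervalIntegral.integral_of_le hab]
  exact this

lemma abs_deriv_le_of_lip {g : ℝ → ℝ} {C : NNReal} (hg : LipschitzWith C g) (s : ℝ) :
    |deriv g s| ≤ C := by
  by_cases h : DifferentiableAt ℝ g s
  · have := h.hasDerivAt.le_of_lipschitz hg
    simpa [Real.norm_eq_abs] using this
  · simp [deriv_zero_of_not_differentiableAt h]

def LipBdd (f : ℝ → ℝ) : Prop :=
  (∃ C : ℝ, 0 ≤ C ∧ ∀ x y, |f x - f y| ≤ C * |x - y|) ∧ (∃ M : ℝ, ∀ x, |f x| ≤ M)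

lemma LipBdd.lipschitz {f : ℝ → ℝ} (hf : LipBdd f) : ∃ C : NNReal, LipschitzWith C f := by
  obtain ⟨⟨C, hC0, hC⟩, -⟩ := hf
  refine ⟨C.toNNReal, LipschitzWith.of_dist_le_mul fun x y => ?_⟩
  rw [Real.dist_eq, Real.dist_eq, Real.coe_toNNReal C hC0]
  exact hC x y

lemma LipBdd.of_lipschitzWith {f : ℝ → ℝ} {C : NNReal} (hf : LipschitzWith C f) {M : ℝ}
    (hM : ∀ x, |f x| ≤ M) : LipBdd f := by
  refine ⟨⟨C, C.coe_nonneg, fun x y => ?_⟩, M, hM⟩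
  have := hf.dist_le_mul x y
  simpa [Real.dist_eq] using this

lemma LipBdd.const (c : ℝ) : LipBdd (fun _ => c) :=
  ⟨⟨0, le_rfl, fun x y => by simp⟩, |c|, fun x => le_rfl⟩

lemma LipBdd.add {f g : ℝ → ℝ} (hf : LipBdd f) (hg : LipBdd g) :
    LipBdd (fun x => f x + g x) := by
  obtain ⟨⟨Cf, hCf0, hCf⟩, Mf, hMf⟩ := hf
  obtain ⟨⟨Cg, hCg0, hCg⟩, Mg, hMg⟩ := hg
  constructor
  · refine ⟨Cf + Cg, by linarith, fun x y => ?_⟩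
    calc |f x + g x - (f y + g y)| ≤ |f x - f y| + |g x - g y| := by
          rw [show f x + g x - (f y + g y) = (f x - f y) + (g x - g y) by ring]
          exact abs_add_le _ _
      _ ≤ Cf * |x - y| + Cg * |x - y| := add_le_add (hCf x y) (hCg x y)
      _ = (Cf + Cg) * |x - y| := by ring
  · exact ⟨Mf + Mg, fun x => (abs_add_le _ _).trans (add_le_add (hMf x) (hMg x))⟩

lemma LipBdd.neg {f : ℝ → ℝ} (hf : LipBdd f) : LipBdd (fun x => -f x) := by
  obtain ⟨⟨Cf, hCf0, hCf⟩, Mf, hMf⟩ := hf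
  exact ⟨⟨Cf, hCf0, fun x y => by
    rw [show -f x - -f y = -(f x - f y) by ring, abs_neg]; exact hCf x y⟩,
    Mf, fun x => by rw [abs_neg]; exact hMf x⟩

lemma LipBdd.sub {f g : ℝ → ℝ} (hf : LipBdd f) (hg : LipBdd g) :
    LipBdd (fun x => f x - g x) := by
  simpa [sub_eq_add_neg] using hf.add hg.neg

lemma LipBdd.mul {f g : ℝ → ℝ} (hf : LipBdd f) (hg : LipBdd g) :
    LipBdd (fun x => f x * g x) := by
  obtain ⟨⟨Cf, hCf0, hCf⟩, Mf, hMf⟩ := hf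
  obtain ⟨⟨Cg, hCg0, hCg⟩, Mg, hMg⟩ := hg
  have hMf0 : 0 ≤ Mf := le_trans (abs_nonneg _) (hMf 0)
  have hMg0 : 0 ≤ Mg := le_trans (abs_nonneg _) (hMg 0)
  constructor
  · refine ⟨Cf * Mg + Mf * Cg, by positivity, fun x y => ?_⟩
    have key : f x * g x - f y * g y = (f x - f y) * g x + f y * (g x - g y) := by ring
    calc |f x * g x - f y * g y| ≤ |f x - f y| * |g x| + |f y| * |g x - g y| := by
          rw [key]; exact (abs_add_le _ _).trans (by rw [abs_mul, abs_mul])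
      _ ≤ (Cf * |x - y|) * Mg + Mf * (Cg * |x - y|) := by
          gcongr
          · exact hCf x y
          · exact hMg x
          · exact hMf y
          · exact hCg x y
      _ = (Cf * Mg + Mf * Cg) * |x - y| := by ring
  · refine ⟨Mf * Mg, fun x => ?_⟩
    rw [abs_mul]
    exact mul_le_mul (hMf x) (hMg x) (abs_nonneg _) hMf0

lemma LipBdd.const_mul {f : ℝ → ℝ} (hf : LipBdd f) (c : ℝ) : LipBdd (fun x => c * f x) :=
  (LipBdd.const c).mul hf

lemma nn_abs_le_one {x : ℝ} (h : |x| ≤ 1) : ‖x‖₊ ≤ 1 := by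
  rw [← NNReal.coe_le_coe, coe_nnnorm, Real.norm_eq_abs]
  exact_mod_cast h

lemma sin_lip : LipschitzWith 1 Real.sin := by
  have h := Convex.lipschitzOnWith_of_nnnorm_hasDerivWithin_le (C := 1)
    (s := (Set.univ : Set ℝ)) convex_univ
    (fun x _ => (Real.hasDerivAt_sin x).hasDerivWithinAt)
    (fun x _ => nn_abs_le_one (Real.abs_cos_le_one x))
  rw [lipschitzOnWith_univ] at h
  exact h

lemma cos_lip : LipschitzWith 1 Real.cos := by
  have h := Convex.lipschitzOnWith_of_nnnorm_hasDerivWithin_le (C := 1)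
    (s := (Set.univ : Set ℝ)) convex_univ
    (fun x _ => (Real.hasDerivAt_cos x).hasDerivWithinAt)
    (fun x _ => nn_abs_le_one (by rw [abs_neg]; exact Real.abs_sin_le_one x))
  rw [lipschitzOnWith_univ] at h
  exact h

lemma LipBdd.sin_comp {f : ℝ → ℝ} (hf : LipBdd f) : LipBdd (fun x => Real.sin (f x)) := by
  obtain ⟨⟨Cf, hCf0, hCf⟩, -⟩ := hf
  refine ⟨⟨Cf, hCf0, fun x y => ?_⟩, 1, fun x => Real.abs_sin_le_one _⟩
  calc |Real.sin (f x) - Real.sin (f y)| ≤ |f x - f y| := by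
        have := sin_lip.dist_le_mul (f x) (f y)
        simpa [Real.dist_eq] using this
    _ ≤ Cf * |x - y| := hCf x y

lemma LipBdd.cos_comp {f : ℝ → ℝ} (hf : LipBdd f) : LipBdd (fun x => Real.cos (f x)) := by
  obtain ⟨⟨Cf, hCf0, hCf⟩, -⟩ := hf
  refine ⟨⟨Cf, hCf0, fun x y => ?_⟩, 1, fun x => Real.abs_cos_le_one _⟩
  calc |Real.cos (f x) - Real.cos (f y)| ≤ |f x - f y| := by
        have := cos_lip.dist_le_mul (f x) (f y)
        simpa [Real.dist_eq] using this
    _ ≤ Cf * |x - y| := hCf x y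

end Helpers
theorem stmt_13 (L : ℝ) (hL : 0 < L) (θ : ℝ → ℝ) (K : NNReal)
    (hθ : LipschitzOnWith K θ (Set.Icc 0 L))
    (h0 : θ 0 = 0) (hLval : θ L = Real.pi)
    (hxL : (∫ t in (0:ℝ)..L, Real.cos (θ t)) = 0)
    (hxpos : ∀ s ∈ Set.Ioo (0:ℝ) L, 0 < ∫ t in (0:ℝ)..s, Real.cos (θ t))
    (hK : ∀ᵐ s ∂(MeasureTheory.volume.restrict (Set.Ioo 0 L)),
      0 ≤ deriv θ s * Real.sin (θ s)) :
    4 * Real.pi * (L / Real.pi) ^ 2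
      - 2 * (L / Real.pi) * (Real.pi * ∫ s in (0:ℝ)..L,
          (Real.sin (θ s) + deriv θ s * ∫ t in (0:ℝ)..s, Real.cos (θ t)))
      + 2 * Real.pi * ∫ s in (0:ℝ)..L, (∫ t in (0:ℝ)..s, Real.cos (θ t)) ≤ 0 := by
  have hπ : (0:ℝ) < Real.pi := Real.pi_pos
  set lam : ℝ := L / Real.pi with hlam
  obtain ⟨θe, hθe_lip, hθe_eq⟩ := hθ.extend_real
  set p : ℝ → ℝ := fun s => min (max s 0) L with hpdef
  have hp_mem : ∀ s, p s ∈ Icc 0 L := fun s =>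
    ⟨le_min (le_max_right s 0) hL.le, min_le_right _ _⟩
  have hp_id : ∀ s ∈ Icc 0 L, p s = s := fun s hs => by
    simp only [hpdef]
    rw [max_eq_left hs.1, min_eq_left hs.2]
  have hp_lip : LipschitzWith 1 p := by
    apply LipschitzWith.of_dist_le_mul
    intro x y
    simp only [Real.dist_eq, NNReal.coe_one, one_mul, hpdef]
    calc |min (max x 0) L - min (max y 0) L| ≤ max |max x 0 - max y 0| |L - L| :=
          abs_min_sub_min_le_max _ _ _ _
      _ ≤ |max x 0 - max y 0| := by
          apply max_le le_rfl
          simp [abs_nonneg]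
      _ ≤ |x - y| := abs_max_sub_max_le_abs _ _ _
  set θc : ℝ → ℝ := fun s => θe (p s) with hθcdef
  have hθc_eq : ∀ s ∈ Icc 0 L, θc s = θ s := fun s hs => by
    simp only [hθcdef]; rw [hp_id s hs]; exact (hθe_eq hs).symm
  have hθc_lip : LipschitzWith (K * 1) θc := hθe_lip.comp hp_lip
  have hθc0 : θc 0 = 0 := by rw [hθc_eq 0 ⟨le_rfl, hL.le⟩, h0]
  have hθcL : θc L = Real.pi := by rw [hθc_eq L ⟨hL.le, le_rfl⟩, hLval]
  have hθc_bdd : ∀ s, |θc s| ≤ (K : ℝ) * L := by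
    intro s
    have hθe0 : θe 0 = 0 := by rw [← hθe_eq ⟨le_rfl, hL.le⟩, h0]
    have h1 : |θe (p s) - θe 0| ≤ (K : ℝ) * |p s - 0| := by
      have := hθe_lip.dist_le_mul (p s) 0
      simpa [Real.dist_eq] using this
    have hps := hp_mem s
    rw [hθe0, sub_zero, sub_zero] at h1
    calc |θc s| ≤ (K : ℝ) * |p s| := h1
      _ ≤ (K : ℝ) * L := by
          apply mul_le_mul_of_nonneg_left _ K.coe_nonneg
          rw [abs_of_nonneg hps.1]; exact hps.2
  have hθc_cont : Continuous θc := hθc_lip.continuous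
  set xc : ℝ → ℝ := fun s => ∫ t in (0:ℝ)..(p s), Real.cos (θc t) with hxcdef
  have hcosint : ∀ u v : ℝ, IntervalIntegrable (fun t => Real.cos (θc t)) volume u v :=
    fun u v => (Real.continuous_cos.comp hθc_cont).intervalIntegrable u v
  have hxc_key : ∀ u v : ℝ, |xc u - xc v| ≤ |p u - p v| := by
    intro u v
    have hsplit : xc u - xc v = ∫ t in (p v)..(p u), Real.cos (θc t) := by
      simp only [hxcdef]
      rw [← intervalIntegral.integral_add_adjacent_intervals (hcosint 0 (p v)) (hcosint (p v) (p u))]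
      ring
    rw [hsplit]
    have := intervalIntegral.norm_integral_le_of_norm_le_const
      (C := 1) (f := fun t => Real.cos (θc t)) (a := p v) (b := p u)
      (fun x _ => by rw [Real.norm_eq_abs]; exact Real.abs_cos_le_one _)
    rw [Real.norm_eq_abs] at this
    calc |∫ t in (p v)..(p u), Real.cos (θc t)| ≤ 1 * |p u - p v| := this
      _ = |p u - p v| := one_mul _
  have hxc_diff_bound : ∀ u v : ℝ, |xc u - xc v| ≤ |u - v| := by
    intro u v
    refine (hxc_key u v).trans ?_
    have := hp_lip.dist_le_mul u v
    simpa [Real.dist_eq] using this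
  have hxc_bdd : ∀ s, |xc s| ≤ L := by
    intro s
    have hp0 : p 0 = 0 := hp_id 0 ⟨le_rfl, hL.le⟩
    have h1 := hxc_key s 0
    have hxc0' : xc 0 = 0 := by
      simp only [hxcdef, hp0]
      exact intervalIntegral.integral_same
    rw [hxc0', sub_zero, hp0, sub_zero] at h1
    refine h1.trans ?_
    have hps := hp_mem s
    rw [abs_of_nonneg hps.1]; exact hps.2
  have hxc0 : xc 0 = 0 := by
    simp only [hxcdef]
    rw [hp_id 0 ⟨le_rfl, hL.le⟩]
    exact intervalIntegral.integral_same
  have hxcL : xc L = 0 := by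
    simp only [hxcdef]
    rw [hp_id L ⟨hL.le, le_rfl⟩]
    rw [show (∫ t in (0:ℝ)..L, Real.cos (θc t)) = ∫ t in (0:ℝ)..L, Real.cos (θ t) from ?_]
    · exact hxL
    · apply intervalIntegral.integral_congr
      intro t ht
      rw [uIcc_of_le hL.le] at ht
      show Real.cos (θc t) = Real.cos (θ t)
      rw [hθc_eq t ht]
  -- LipBdd facts
  have hθcB : LipBdd θc := LipBdd.of_lipschitzWith hθc_lip hθc_bdd
  have hpB : LipBdd p := LipBdd.of_lipschitzWith hp_lip
    (fun s => by
      have := hp_mem s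
      rw [abs_of_nonneg this.1]; exact this.2)
  have hxcB : LipBdd xc := ⟨⟨1, zero_le_one, fun x y => by
      rw [one_mul]; exact hxc_diff_bound x y⟩, L, hxc_bdd⟩
  -- definition of Φ
  set Φ : ℝ → ℝ := fun s => (lam * θc s - p s) * (lam * θc s - p s) * (-Real.cos (θc s))
      + 2 * lam ^ 2 * (θc s * Real.sin (θc s) + Real.cos (θc s))
      - 2 * lam * (θc s * xc s)
      - 2 * lam * (p s * Real.sin (θc s))
      + 2 * (p s * xc s)
      + 4 * lam ^ 2 / L * p s with hΦdef
  have hΦB : LipBdd Φ := by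
    apply LipBdd.add
    apply LipBdd.add
    apply LipBdd.sub
    apply LipBdd.sub
    apply LipBdd.add
    · exact (((hθcB.const_mul lam).sub hpB).mul ((hθcB.const_mul lam).sub hpB)).mul
        hθcB.cos_comp.neg
    · exact ((hθcB.mul hθcB.sin_comp).add hθcB.cos_comp).const_mul (2 * lam ^ 2)
    · exact (hθcB.mul hxcB).const_mul (2 * lam)
    · exact (hpB.mul hθcB.sin_comp).const_mul (2 * lam)
    · exact (hpB.mul hxcB).const_mul 2
    · exact hpB.const_mul (4 * lam ^ 2 / L)
  -- derivative of Φ on Ioo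
  set q : ℝ → ℝ := fun s => Real.sin (θc s) + deriv θc s * xc s with hqdef
  set g1 : ℝ → ℝ := fun s =>
    (lam * θc s - s) ^ 2 * (deriv θc s * Real.sin (θc s)) with hg1def
  set h0f : ℝ → ℝ := fun s => g1 s - 2 * lam * q s + 2 * xc s + 4 * lam ^ 2 / L with hh0def
  have hΦderiv : ∀ s ∈ Ioo (0:ℝ) L, DifferentiableAt ℝ θc s → deriv Φ s = h0f s := by
    intro s hs hd
    have hmem : Ioo (0:ℝ) L ∈ 𝓝 s := isOpen_Ioo.mem_nhds hs
    have hps : p s = s := hp_id s (Ioo_subset_Icc_self hs)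
    have hpev : p =ᶠ[𝓝 s] id := by
      filter_upwards [hmem] with u hu
      exact hp_id u (Ioo_subset_Icc_self hu)
    have hpd : HasDerivAt p 1 s := (hasDerivAt_id s).congr_of_eventuallyEq hpev
    have hθd : HasDerivAt θc (deriv θc s) s := hd.hasDerivAt
    have hcoscont : Continuous (fun t => Real.cos (θc t)) := Real.continuous_cos.comp hθc_cont
    have hXd : HasDerivAt (fun u => ∫ t in (0:ℝ)..u, Real.cos (θc t)) (Real.cos (θc s)) s :=
      intervalIntegral.integral_hasDerivAt_right (hcosint 0 s)
        (hcoscont.stronglyMeasurableAtFilter _ _) hcoscont.continuousAt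
    have hxev : xc =ᶠ[𝓝 s] (fun u => ∫ t in (0:ℝ)..u, Real.cos (θc t)) := by
      filter_upwards [hmem] with u hu
      simp only [hxcdef]
      rw [hp_id u (Ioo_subset_Icc_self hu)]
    have hxd : HasDerivAt xc (Real.cos (θc s)) s := hXd.congr_of_eventuallyEq hxev
    have hsind : HasDerivAt (fun u => Real.sin (θc u)) (Real.cos (θc s) * deriv θc s) s :=
      (Real.hasDerivAt_sin (θc s)).comp s hθd
    have hcosd : HasDerivAt (fun u => Real.cos (θc u)) (-Real.sin (θc s) * deriv θc s) s :=
      (Real.hasDerivAt_cos (θc s)).comp s hθd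
    have h1 : HasDerivAt (fun u => lam * θc u - p u) (lam * deriv θc s - 1) s :=
      (hθd.const_mul lam).sub hpd
    have hbig : HasDerivAt Φ
        (((lam * deriv θc s - 1) * (lam * θc s - p s)
            + (lam * θc s - p s) * (lam * deriv θc s - 1)) * (-Real.cos (θc s))
          + (lam * θc s - p s) * (lam * θc s - p s) * (-(-Real.sin (θc s) * deriv θc s))
          + 2 * lam ^ 2 * ((deriv θc s * Real.sin (θc s)
              + θc s * (Real.cos (θc s) * deriv θc s)) + -Real.sin (θc s) * deriv θc s)
          - 2 * lam * (deriv θc s * xc s + θc s * Real.cos (θc s))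
          - 2 * lam * (1 * Real.sin (θc s) + p s * (Real.cos (θc s) * deriv θc s))
          + 2 * (1 * xc s + p s * Real.cos (θc s))
          + 4 * lam ^ 2 / L * 1) s := by
      exact ((((((((h1.mul h1).mul hcosd.neg).add
        (((hθd.mul hsind).add hcosd).const_mul (2 * lam ^ 2))).sub
        ((hθd.mul hxd).const_mul (2 * lam))).sub
        ((hpd.mul hsind).const_mul (2 * lam))).add
        ((hpd.mul hxd).const_mul 2)).add
        (hpd.const_mul (4 * lam ^ 2 / L))))
    rw [hbig.deriv]
    simp only [hh0def, hg1def, hqdef]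
    rw [hps]
    ring
  -- FTC
  have hFTC : (∫ s in (0:ℝ)..L, deriv Φ s) = Φ L - Φ 0 := by
    obtain ⟨C, hC⟩ := hΦB.lipschitz
    exact lipschitz_ftc hC hL.le
  have hboundary : Φ L - Φ 0 = 0 := by
    have hpL : p L = L := hp_id L ⟨hL.le, le_rfl⟩
    have hp0 : p 0 = 0 := hp_id 0 ⟨le_rfl, hL.le⟩
    have hΦL : Φ L = 2 * lam ^ 2 := by
      simp only [hΦdef]
      rw [hθcL, hxcL, hpL, Real.sin_pi, Real.cos_pi, hlam]
      field_simp
      ring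
    have hΦ0 : Φ 0 = 2 * lam ^ 2 := by
      simp only [hΦdef]
      rw [hθc0, hxc0, hp0, Real.sin_zero, Real.cos_zero]
      ring
    rw [hΦL, hΦ0, sub_self]
  -- a.e. equality of deriv Φ and h0f on the interval
  have hneL : ∀ᵐ x ∂(volume : Measure ℝ), x ≠ L := by
    rw [ae_iff]
    have : {x : ℝ | ¬ x ≠ L} = {L} := by ext x; simp
    rw [this]
    exact measure_singleton L
  have hdiff_ae : ∀ᵐ s ∂(volume : Measure ℝ), DifferentiableAt ℝ θc s :=
    hθc_lip.ae_differentiableAt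
  have hint_h0 : (∫ s in (0:ℝ)..L, h0f s) = 0 := by
    have hcg : (∫ s in (0:ℝ)..L, h0f s) = ∫ s in (0:ℝ)..L, deriv Φ s := by
      apply intervalIntegral.integral_congr_ae
      rw [uIoc_of_le hL.le]
      filter_upwards [hneL, hdiff_ae] with x hx1 hx2 hmem
      exact (hΦderiv x ⟨hmem.1, lt_of_le_of_ne hmem.2 hx1⟩ hx2).symm
    rw [hcg, hFTC, hboundary]
  -- integrability
  have hK1 : ∀ s, |deriv θc s| ≤ (K : ℝ) := by
    intro s
    have := abs_deriv_le_of_lip hθc_lip s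
    simpa using this
  have hmeasθ' : Measurable (deriv θc) := measurable_deriv _
  have hxc_cont : Continuous xc := by
    obtain ⟨C, hC⟩ := hxcB.lipschitz
    exact hC.continuous
  have hsin_meas : Measurable (fun s => Real.sin (θc s)) :=
    (Real.continuous_sin.comp hθc_cont).measurable
  have hg1_int : IntervalIntegrable g1 volume 0 L := by
    rw [intervalIntegrable_iff]
    apply Integrable.mono' (g := fun _ => (|lam| * ((K : ℝ) * L) + L) ^ 2 * (K : ℝ))
    · exact (integrableOn_const_iff).mpr (Or.inr (by
        rw [uIoc_of_le hL.le]; exact measure_Ioc_lt_top))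
    · apply Measurable.aestronglyMeasurable
      exact (((hθc_cont.measurable.const_mul lam).sub measurable_id).pow_const 2).mul
        (hmeasθ'.mul hsin_meas)
    · filter_upwards [ae_restrict_mem measurableSet_uIoc] with s hsm
      rw [uIoc_of_le hL.le] at hsm
      have hsabs : |s| ≤ L := by rw [abs_of_pos hsm.1]; exact hsm.2
      have h1 : |lam * θc s - s| ≤ |lam| * ((K : ℝ) * L) + L := by
        have h2 := abs_add_le (lam * θc s) (-s)
        rw [← sub_eq_add_neg, abs_neg] at h2
        refine h2.trans (add_le_add ?_ hsabs)
        rw [abs_mul]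
        exact mul_le_mul_of_nonneg_left (hθc_bdd s) (abs_nonneg lam)
      have h3 : |deriv θc s * Real.sin (θc s)| ≤ (K : ℝ) := by
        rw [abs_mul]
        calc |deriv θc s| * |Real.sin (θc s)| ≤ (K : ℝ) * 1 :=
              mul_le_mul (hK1 s) (Real.abs_sin_le_one _) (abs_nonneg _) K.coe_nonneg
          _ = (K : ℝ) := mul_one _
      simp only [hg1def]
      rw [Real.norm_eq_abs, abs_mul, abs_of_nonneg (sq_nonneg (lam * θc s - s))]
      apply mul_le_mul _ h3 (abs_nonneg _) (by positivity)
      rw [← sq_abs]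
      exact pow_le_pow_left₀ (abs_nonneg _) h1 2
  have hq_int : IntervalIntegrable q volume 0 L := by
    rw [intervalIntegrable_iff]
    apply Integrable.mono' (g := fun _ => 1 + (K : ℝ) * L)
    · exact (integrableOn_const_iff).mpr (Or.inr (by
        rw [uIoc_of_le hL.le]; exact measure_Ioc_lt_top))
    · exact (hsin_meas.add (hmeasθ'.mul hxc_cont.measurable)).aestronglyMeasurable
    · filter_upwards with s
      simp only [hqdef]
      rw [Real.norm_eq_abs]
      calc |Real.sin (θc s) + deriv θc s * xc s|
          ≤ |Real.sin (θc s)| + |deriv θc s * xc s| := abs_add_le _ _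
        _ ≤ 1 + (K : ℝ) * L := by
            gcongr ?_ + ?_
            · exact Real.abs_sin_le_one _
            · rw [abs_mul]
              exact mul_le_mul (hK1 s) (hxc_bdd s) (abs_nonneg _) K.coe_nonneg
  have hxc_int : IntervalIntegrable xc volume 0 L := hxc_cont.intervalIntegrable 0 L
  -- split the integral
  have hsplit : (∫ s in (0:ℝ)..L, g1 s)
      = 2 * lam * (∫ s in (0:ℝ)..L, q s) - 2 * (∫ s in (0:ℝ)..L, xc s) - 4 * lam ^ 2 := by
    have hs1 : (∫ s in (0:ℝ)..L, h0f s)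
        = (∫ s in (0:ℝ)..L, g1 s) - 2 * lam * (∫ s in (0:ℝ)..L, q s)
          + 2 * (∫ s in (0:ℝ)..L, xc s) + (L - 0) • (4 * lam ^ 2 / L) := by
      simp only [hh0def]
      rw [intervalIntegral.integral_add
          (((hg1_int.sub (hq_int.const_mul _)).add (hxc_int.const_mul _)))
          intervalIntegrable_const,
        intervalIntegral.integral_add (hg1_int.sub (hq_int.const_mul _)) (hxc_int.const_mul _),
        intervalIntegral.integral_sub hg1_int (hq_int.const_mul _),
        intervalIntegral.integral_const_mul, intervalIntegral.integral_const_mul,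
        intervalIntegral.integral_const]
    rw [hs1] at hint_h0
    have hsm : (L - 0) • (4 * lam ^ 2 / L) = 4 * lam ^ 2 := by
      rw [smul_eq_mul, sub_zero]
      field_simp
    rw [hsm] at hint_h0
    linarith
  -- nonnegativity
  have hne0 : ∀ᵐ x ∂(volume : Measure ℝ), x ≠ 0 := by
    rw [ae_iff]
    have : {x : ℝ | ¬ x ≠ 0} = {0} := by ext x; simp
    rw [this]
    exact measure_singleton 0
  have hg1_nonneg : 0 ≤ ∫ s in (0:ℝ)..L, g1 s := by
    apply intervalIntegral.integral_nonneg_of_ae_restrict hL.le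
    have hIoo : ∀ᵐ s ∂(volume.restrict (Ioo (0:ℝ) L)), 0 ≤ g1 s := by
      filter_upwards [hK, ae_restrict_mem measurableSet_Ioo] with s hs hmem
      have hev : θ =ᶠ[𝓝 s] θc := by
        filter_upwards [isOpen_Ioo.mem_nhds hmem] with u hu
        exact (hθc_eq u (Ioo_subset_Icc_self hu)).symm
      have hde : deriv θ s = deriv θc s := hev.deriv_eq
      have hsin : Real.sin (θc s) = Real.sin (θ s) := by
        rw [hθc_eq s (Ioo_subset_Icc_self hmem)]
      simp only [hg1def]
      apply mul_nonneg (sq_nonneg _)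
      rw [hsin, ← hde]
      exact hs
    refine (ae_restrict_iff' measurableSet_Icc).mpr ?_
    filter_upwards [(ae_restrict_iff' measurableSet_Ioo).mp hIoo, hneL, hne0]
      with s hs1 hs2 hs3 hmem
    exact hs1 ⟨lt_of_le_of_ne hmem.1 (Ne.symm hs3), lt_of_le_of_ne hmem.2 hs2⟩
  -- identify with statement integrals
  have hAeq : (∫ s in (0:ℝ)..L,
      (Real.sin (θ s) + deriv θ s * ∫ t in (0:ℝ)..s, Real.cos (θ t)))
      = ∫ s in (0:ℝ)..L, q s := by
    apply intervalIntegral.integral_congr_ae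
    rw [uIoc_of_le hL.le]
    filter_upwards [hneL] with s hs hmem
    have hmem' : s ∈ Ioo (0:ℝ) L := ⟨hmem.1, lt_of_le_of_ne hmem.2 hs⟩
    have hev : θ =ᶠ[𝓝 s] θc := by
      filter_upwards [isOpen_Ioo.mem_nhds hmem'] with u hu
      exact (hθc_eq u (Ioo_subset_Icc_self hu)).symm
    have hde : deriv θ s = deriv θc s := hev.deriv_eq
    have hxeq : (∫ t in (0:ℝ)..s, Real.cos (θ t)) = xc s := by
      simp only [hxcdef]
      rw [hp_id s (Ioo_subset_Icc_self hmem')]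
      apply intervalIntegral.integral_congr
      intro t ht
      rw [uIcc_of_le hmem'.1.le] at ht
      show Real.cos (θ t) = Real.cos (θc t)
      rw [hθc_eq t ⟨ht.1, ht.2.trans hmem'.2.le⟩]
    simp only [hqdef]
    rw [hxeq, hde, hθc_eq s (Ioo_subset_Icc_self hmem')]
  have hBeq : (∫ s in (0:ℝ)..L, (∫ t in (0:ℝ)..s, Real.cos (θ t)))
      = ∫ s in (0:ℝ)..L, xc s := by
    apply intervalIntegral.integral_congr_ae
    rw [uIoc_of_le hL.le]
    filter_upwards [hneL] with s hs hmem
    have hmem' : s ∈ Ioo (0:ℝ) L := ⟨hmem.1, lt_of_le_of_ne hmem.2 hs⟩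
    simp only [hxcdef]
    rw [hp_id s (Ioo_subset_Icc_self hmem')]
    apply intervalIntegral.integral_congr
    intro t ht
    rw [uIcc_of_le hmem'.1.le] at ht
    show Real.cos (θ t) = Real.cos (θc t)
    rw [hθc_eq t ⟨ht.1, ht.2.trans hmem'.2.le⟩]
  rw [hAeq, hBeq]
  nlinarith [hg1_nonneg, hsplit, hπ, sq_nonneg lam,
    mul_nonneg hπ.le hg1_nonneg]
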